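/- For each 1 ≤ j ≤ g, β̄_j is divisible by e_j, and n_j = min{ r ∈ ℤ_{>0} : r·β̄_j ∈ (e_{j−1}) }. -/
import Mathlib


/-- For each `1 ≤ j ≤ g`, `β̄_j` is divisible by `e_j`, and
`n_j = min{r ∈ ℤ_{>0} : r·β̄_j ∈ (e_{j−1})}`. -/
theorem e_dvd_bb_and_nn_least (n g : ℕ) (hn : 2 ≤ n) (hg : 1 ≤ g)
    (β e nn bb : ℕ → ℕ)
    (he0 : e 0 = n)
    (he : ∀ j, 1 ≤ j → j ≤ g → e j = Nat.gcd (e (j - 1)) (β j))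
    (heg : e g = 1)
    (hβmono : ∀ j, 1 ≤ j → j < g → β j < β (j + 1))
    (hchar : ∀ j, 1 ≤ j → j ≤ g → ¬ e (j - 1) ∣ β j)
    (hβ1 : n < β 1)
    (hnn : ∀ j, 1 ≤ j → j ≤ g → nn j = e (j - 1) / e j)
    (hbb1 : bb 1 = β 1)
    (hbb : ∀ j, 2 ≤ j → j ≤ g → bb j = nn (j - 1) * bb (j - 1) - β (j - 1) + β j) :
    ∀ j, 1 ≤ j → j ≤ g →
      e j ∣ bb j ∧ IsLeast {r : ℕ | 0 < r ∧ e (j - 1) ∣ r * bb j} (nn j) := by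
  -- positivity of e
  have hepos : ∀ j, j ≤ g → 0 < e j := by
    intro j
    induction j with
    | zero => intro _; rw [he0]; omega
    | succ k ih =>
      intro hk
      rw [he (k + 1) (by omega) hk]
      simp only [Nat.add_sub_cancel]
      exact Nat.gcd_pos_of_pos_left _ (ih (by omega))
  -- key: gcd (e (j-1)) (bb j) = e j
  have key : ∀ j, 1 ≤ j → j ≤ g → Nat.gcd (e (j - 1)) (bb j) = e j := by
    intro j
    induction j with
    | zero => omega
    | succ k ih =>
      intro _ hk
      rcases Nat.eq_zero_or_pos k with h0 | hkpos
      · subst h0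
        simp only [Nat.sub_self]
        rw [hbb1, he 1 le_rfl hk]
      · have hkg : k ≤ g := by omega
        have hgcdk := ih hkpos hkg
        have hejk : e k ∣ bb k := by rw [← hgcdk]; exact Nat.gcd_dvd_right _ _
        have hedvd : e k ∣ e (k - 1) := by
          rw [he k hkpos hkg]; exact Nat.gcd_dvd_left _ _
        have heβ : e k ∣ β k := by
          rw [he k hkpos hkg]; exact Nat.gcd_dvd_right _ _
        have h1 : e k ∣ nn k * bb k := by
          refine dvd_trans hedvd ?_
          rw [hnn k hkpos hkg]
          obtain ⟨c, hc⟩ := hejk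
          rw [hc, ← mul_assoc, Nat.div_mul_cancel hedvd]
          exact dvd_mul_right _ _
        obtain ⟨c, hc⟩ := Nat.dvd_sub h1 heβ
        have hbbk1 : bb (k + 1) = β (k + 1) + c * e k := by
          rw [hbb (k + 1) (by omega) hk]
          simp only [Nat.add_sub_cancel]
          rw [hc]; ring
        simp only [Nat.add_sub_cancel]
        rw [hbbk1, Nat.gcd_add_mul_right_right (e k) (β (k + 1)) c,
          he (k + 1) (by omega) hk]
        simp
  intro j hj hjg
  have hg1 := key j hj hjg
  have ha : 0 < e (j - 1) := hepos (j - 1) (by omega)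
  have hd : 0 < e j := hepos j hjg
  have hdvdb : e j ∣ bb j := by rw [← hg1]; exact Nat.gcd_dvd_right _ _
  have hdvda : e j ∣ e (j - 1) := by rw [← hg1]; exact Nat.gcd_dvd_left _ _
  refine ⟨hdvdb, ⟨⟨?_, ?_⟩, ?_⟩⟩
  · rw [hnn j hj hjg]
    exact Nat.div_pos (Nat.le_of_dvd ha hdvda) hd
  · obtain ⟨c, hc⟩ := hdvdb
    rw [hnn j hj hjg, hc, ← mul_assoc, Nat.div_mul_cancel hdvda]
    exact dvd_mul_right _ _
  · rintro r ⟨hr, hrd⟩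
    rw [hnn j hj hjg]
    have hcop : Nat.Coprime (e (j - 1) / e j) (bb j / e j) := by
      have := Nat.coprime_div_gcd_div_gcd
        (show 0 < Nat.gcd (e (j - 1)) (bb j) by rw [hg1]; exact hd)
      rwa [hg1] at this
    have hdr : e (j - 1) / e j ∣ r := by
      have h2 : (e (j - 1) / e j) * e j ∣ r * (bb j / e j) * e j := by
        rw [Nat.div_mul_cancel hdvda, mul_assoc, Nat.div_mul_cancel hdvdb]
        exact hrd
      exact hcop.dvd_of_dvd_mul_right ((Nat.mul_dvd_mul_iff_right hd).mp h2)
    exact Nat.le_of_dvd hr hdr
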